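/- Let f ∈ (0,1) and κ, γ₁, γ₂, γ₃ > 0, and let u* ∈ [0,1]⁴ be a steady state of the ZIP regulatory system. Then for every real λ ≥ −1 one has det(λ·I − J(u*)) > 0; in particular, every real eigenvalue λ of the Jacobian J(u*) satisfies λ < −1. -/
import Mathlib


/-- The ZIP regulatory vector field on ℝ⁴ (components indexed by `Fin 4`). -/
noncomputable def zipField (κ γ₁ γ₂ γ₃ f : ℝ) (u : Fin 4 → ℝ) : Fin 4 → ℝ :=
  ![κ * (u 2) ^ 2 * (1 - u 0) - u 0,
    u 0 * f - u 1,
    1 - γ₁ * u 2 * u 3 - u 2,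
    γ₂ * u 1 - γ₃ * u 2 * u 3 - (1 + γ₂ * u 1) * u 3]

/-- The Jacobian matrix of the ZIP regulatory vector field at a point u. -/
noncomputable def zipJacobian (κ γ₁ γ₂ γ₃ f : ℝ) (u : Fin 4 → ℝ) :
    Matrix (Fin 4) (Fin 4) ℝ :=
  !![-(κ * (u 2) ^ 2) - 1, 0, 2 * κ * u 2 * (1 - u 0), 0;
     f, -1, 0, 0;
     0, 0, -(γ₁ * u 3) - 1, -(γ₁ * u 2);
     0, γ₂ * (1 - u 3), -(γ₃ * u 3), -(γ₃ * u 2) - 1 - γ₂ * u 1]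

/-- at a steady state in [0,1]⁴, det(λI − J) > 0 for every real
λ ≥ −1; in particular every real eigenvalue of the Jacobian is < −1. -/
theorem zip_real_eigenvalues_lt_neg_one
    (κ γ₁ γ₂ γ₃ f : ℝ) (hκ : 0 < κ) (hγ₁ : 0 < γ₁) (hγ₂ : 0 < γ₂) (hγ₃ : 0 < γ₃)
    (hf : f ∈ Set.Ioo (0 : ℝ) 1)
    (u : Fin 4 → ℝ) (hu : ∀ i, u i ∈ Set.Icc (0 : ℝ) 1)
    (hsteady : zipField κ γ₁ γ₂ γ₃ f u = 0) :
    (∀ lam : ℝ, -1 ≤ lam →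
      0 < (lam • (1 : Matrix (Fin 4) (Fin 4) ℝ) - zipJacobian κ γ₁ γ₂ γ₃ f u).det) ∧
    (∀ lam : ℝ,
      (lam • (1 : Matrix (Fin 4) (Fin 4) ℝ) - zipJacobian κ γ₁ γ₂ γ₃ f u).det = 0 →
      lam < -1) := by
  obtain ⟨hf0, hf1⟩ := hf
  have h0 : κ * (u 2) ^ 2 * (1 - u 0) - u 0 = 0 := by
    have := congrFun hsteady 0; simpa [zipField] using this
  have h2 : 1 - γ₁ * u 2 * u 3 - u 2 = 0 := by
    have := congrFun hsteady 2; simpa [zipField] using this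
  have h3 : γ₂ * u 1 - γ₃ * u 2 * u 3 - (1 + γ₂ * u 1) * u 3 = 0 := by
    have := congrFun hsteady 3; simpa [zipField] using this
  obtain ⟨hu0l, hu0r⟩ := hu 0
  obtain ⟨hu1l, hu1r⟩ := hu 1
  obtain ⟨hu2l, hu2r⟩ := hu 2
  obtain ⟨hu3l, hu3r⟩ := hu 3
  have hu2pos : 0 < u 2 := by nlinarith [mul_nonneg hγ₁.le hu3l, mul_nonneg (mul_nonneg hγ₁.le hu2l) hu3l]
  have h1u0 : 0 < 1 - u 0 := by nlinarith [mul_nonneg hκ.le (sq_nonneg (u 2))]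
  have h1u3 : 0 < 1 - u 3 := by nlinarith [mul_nonneg hγ₂.le hu1l, mul_pos hγ₃ hu2pos]
  have hdet : ∀ lam : ℝ,
      (lam • (1 : Matrix (Fin 4) (Fin 4) ℝ) - zipJacobian κ γ₁ γ₂ γ₃ f u).det =
      (lam + 1 + κ * (u 2) ^ 2) * (lam + 1) *
        ((lam + 1) ^ 2 + (lam + 1) * (γ₁ * u 3 + γ₂ * u 1 + γ₃ * u 2)
          + γ₁ * γ₂ * u 1 * u 3)
      + 2 * f * κ * γ₁ * γ₂ * (u 2) ^ 2 * (1 - u 0) * (1 - u 3) := by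
    intro lam
    have hM : lam • (1 : Matrix (Fin 4) (Fin 4) ℝ) - zipJacobian κ γ₁ γ₂ γ₃ f u =
        !![lam + κ * (u 2) ^ 2 + 1, 0, -(2 * κ * u 2 * (1 - u 0)), 0;
           -f, lam + 1, 0, 0;
           0, 0, lam + γ₁ * u 3 + 1, γ₁ * u 2;
           0, -(γ₂ * (1 - u 3)), γ₃ * u 3, lam + γ₃ * u 2 + 1 + γ₂ * u 1] := by
      ext i j
      fin_cases i <;> fin_cases j <;>
        simp [zipJacobian, Matrix.smul_apply, Matrix.one_apply, Matrix.vecHead, Matrix.vecTail] <;> ring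
    rw [hM]
    simp [Matrix.det_succ_row_zero, Fin.sum_univ_succ, Fin.succAbove, Matrix.vecHead, Matrix.vecTail]
    ring
  have key : ∀ lam : ℝ, -1 ≤ lam →
      0 < (lam • (1 : Matrix (Fin 4) (Fin 4) ℝ) - zipJacobian κ γ₁ γ₂ γ₃ f u).det := by
    intro lam hl
    rw [hdet lam]
    have hs : 0 ≤ lam + 1 := by linarith
    have hκu : 0 ≤ κ * (u 2) ^ 2 := by positivity
    have t1 : 0 ≤ (lam + 1 + κ * (u 2) ^ 2) * (lam + 1) *
        ((lam + 1) ^ 2 + (lam + 1) * (γ₁ * u 3 + γ₂ * u 1 + γ₃ * u 2)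
          + γ₁ * γ₂ * u 1 * u 3) := by
      apply mul_nonneg (mul_nonneg (by linarith) hs)
      have a1 : 0 ≤ (lam + 1) ^ 2 := sq_nonneg _
      have a2 : 0 ≤ (lam + 1) * (γ₁ * u 3 + γ₂ * u 1 + γ₃ * u 2) := by
        apply mul_nonneg hs
        have := mul_nonneg hγ₁.le hu3l
        have := mul_nonneg hγ₂.le hu1l
        have := mul_nonneg hγ₃.le hu2l
        linarith
      have a3 : 0 ≤ γ₁ * γ₂ * u 1 * u 3 :=
        mul_nonneg (mul_nonneg (mul_nonneg hγ₁.le hγ₂.le) hu1l) hu3l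
      linarith
    have t2 : 0 < 2 * f * κ * γ₁ * γ₂ * (u 2) ^ 2 * (1 - u 0) * (1 - u 3) :=
      mul_pos (mul_pos (mul_pos (mul_pos (mul_pos (mul_pos
        (by linarith : (0:ℝ) < 2 * f) hκ) hγ₁) hγ₂) (pow_pos hu2pos 2)) h1u0) h1u3
    linarith
  refine ⟨key, fun lam hdet0 => ?_⟩
  by_contra h
  push_neg at h
  exact absurd hdet0 (ne_of_gt (key lam h))
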